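/- Let G be a Lie group acting smoothly on a smooth boundaryless Hausdorff manifold M, let X be a smooth (C^∞) G-equivariant vector field on M, and let γ : ℝ → M be an integral curve of X. Then the isotropy is constant along γ: for every τ ∈ ℝ, the stabilizer subgroup of γ(τ) in G equals the stabilizer subgroup of γ(0); in particular, every g ∈ G with g·γ(0) = γ(0) satisfies g·γ(τ) = γ(τ) for all τ ∈ ℝ. -/

import Mathlib

open scoped Manifold

private lemma key_integral_smul
    {EG : Type*} [NormedAddCommGroup EG] [NormedSpace ℝ EG]
    {HG : Type*} [TopologicalSpace HG] {IG : ModelWithCorners ℝ EG HG}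
    {G : Type*} [TopologicalSpace G] [ChartedSpace HG G] [Group G]
    [IsManifold IG (⊤ : ℕ∞) G] [LieGroup IG (⊤ : ℕ∞) G]
    {EM : Type*} [NormedAddCommGroup EM] [NormedSpace ℝ EM]
    {HM : Type*} [TopologicalSpace HM] {IM : ModelWithCorners ℝ EM HM}
    {M : Type*} [TopologicalSpace M] [ChartedSpace HM M] [IsManifold IM (⊤ : ℕ∞) M]
    [MulAction G M]
    (hact : ContMDiff (IG.prod IM) IM (⊤ : ℕ∞) fun p : G × M => p.1 • p.2)
    (X : (x : M) → TangentSpace IM x)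
    (hX_equiv : ∀ (g : G) (p : M), X (g • p) = mfderiv IM IM (fun q : M => g • q) p (X p))
    (γ : ℝ → M) (hγ : IsMIntegralCurve γ X) (g : G) :
    IsMIntegralCurve (fun t => g • γ t) X := by
  have hg : ContMDiff IM IM (⊤ : ℕ∞) (fun q : M => g • q) :=
    hact.comp (contMDiff_const.prodMk contMDiff_id)
  intro t
  have h1 := ((hg (γ t)).mdifferentiableAt (by simp)).hasMFDerivAt.comp t (hγ t)
  have h2 : (mfderiv IM IM (fun q : M => g • q) (γ t)).comp
      ((1 : ℝ →L[ℝ] ℝ).smulRight (X (γ t)))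
      = (1 : ℝ →L[ℝ] ℝ).smulRight (X (g • γ t)) := by
    rw [hX_equiv g (γ t)]
    ext; simp
  replace h1 := h1.congr_mfderiv h2
  exact h1

/-- Let `G` be a Lie group acting smoothly on a smooth boundaryless Hausdorff
manifold `M`, let `X` be a smooth `G`-equivariant vector field on `M`, and let `γ : ℝ → M` be an
integral curve of `X`.  Then the isotropy is constant along `γ`: for every `τ`, the stabilizer
of `γ τ` in `G` equals the stabilizer of `γ 0`. -/
theorem stabilizer_constant_along_integral_curve
    {EG : Type*} [NormedAddCommGroup EG] [NormedSpace ℝ EG]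
    {HG : Type*} [TopologicalSpace HG] {IG : ModelWithCorners ℝ EG HG}
    {G : Type*} [TopologicalSpace G] [ChartedSpace HG G] [Group G]
    [IsManifold IG (⊤ : ℕ∞) G] [LieGroup IG (⊤ : ℕ∞) G]
    {EM : Type*} [NormedAddCommGroup EM] [NormedSpace ℝ EM]
    {HM : Type*} [TopologicalSpace HM] {IM : ModelWithCorners ℝ EM HM}
    {M : Type*} [TopologicalSpace M] [ChartedSpace HM M] [IsManifold IM (⊤ : ℕ∞) M]
    [T2Space M] [BoundarylessManifold IM M]
    [MulAction G M]
    (hact : ContMDiff (IG.prod IM) IM (⊤ : ℕ∞) fun p : G × M => p.1 • p.2)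
    (X : (x : M) → TangentSpace IM x)
    (hX_smooth : ContMDiff IM IM.tangent (⊤ : ℕ∞)
      fun x : M => (⟨x, X x⟩ : TangentBundle IM M))
    (hX_equiv : ∀ (g : G) (p : M), X (g • p) = mfderiv IM IM (fun q : M => g • q) p (X p))
    (γ : ℝ → M) (hγ : IsMIntegralCurve γ X) :
    ∀ τ : ℝ, MulAction.stabilizer G (γ τ) = MulAction.stabilizer G (γ 0) := by
  have hX1 : ContMDiff IM IM.tangent 1 (fun x : M => (⟨x, X x⟩ : TangentBundle IM M)) :=
    hX_smooth.of_le (by exact_mod_cast (le_top : (1 : ℕ∞) ≤ ⊤))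
  have key : ∀ (g : G) (τ₀ : ℝ), g • γ τ₀ = γ τ₀ → ∀ t, g • γ t = γ t := by
    intro g τ₀ h t
    have h1 : (fun t => g • γ t) = γ :=
      isMIntegralCurve_Ioo_eq_of_contMDiff_boundaryless (t₀ := τ₀) hX1
        (key_integral_smul hact X hX_equiv γ hγ g) hγ h
    exact congrFun h1 t
  intro τ
  ext g
  simp only [MulAction.mem_stabilizer_iff]
  constructor
  · intro h; exact key g τ h 0
  · intro h; exact key g 0 h τ
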